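/- (Double coset formula / Mackey decomposition for an induced character.) Let G be a finite group, J and H subgroups of G, φ : H → ℂˣ a character, and let Z ⊆ G be a complete set of representatives of the double cosets J\G/H. For z ∈ Z let φ_z denote the character of J ∩ zHz⁻¹ given by φ_z(x) = φ(z⁻¹xz). Then the map α, defined on the ℂ[J]-module obtained from ℂ[G] ⊗_{ℂ[H]} ℂ_φ by restricting the G-action to J, which sends g ⊗ w (for g = jzh with j ∈ J, z ∈ Z, h ∈ H, w ∈ ℂ) to the element j ⊗ φ(h)w in the z-indexed summand, is a well-defined isomorphism of ℂ[J]-modules α : Res_J(ℂ[G] ⊗_{ℂ[H]} ℂ_φ) ≅ ⊕_{z ∈ Z} ℂ[J] ⊗_{ℂ[J ∩ zHz⁻¹]} ℂ_{φ_z}, with inverse given by α⁻¹(j ⊗ w) = jz ⊗ w on the z-indexed summand. -/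

import Mathlib

noncomputable section

/-- The submodule of relations defining `ℂ[G] ⊗_{ℂ[H]} ℂ_φ`: the left ideal of `ℂ[G]`
generated by the elements `h - φ(h)·1` for `h ∈ H`. -/
def inducedRel {G : Type*} [Group G] (H : Subgroup G) (φ : H →* ℂˣ) :
    Submodule (MonoidAlgebra ℂ G) (MonoidAlgebra ℂ G) :=
  Submodule.span (MonoidAlgebra ℂ G)
    {a | ∃ h : H, a = MonoidAlgebra.single (h : G) 1 - MonoidAlgebra.single 1 ((φ h : ℂ))}

/-- The induced left `ℂ[G]`-module `ℂ[G] ⊗_{ℂ[H]} ℂ_φ`, realized as the quotient of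
`ℂ[G]` by `inducedRel H φ`; the class of `single g w` corresponds to `g ⊗ w`. -/
abbrev InducedModule {G : Type*} [Group G] (H : Subgroup G) (φ : H →* ℂˣ) :=
  MonoidAlgebra ℂ G ⧸ inducedRel H φ

lemma aux_mk_single_mul {K : Type*} [Group K] (S : Subgroup K) (ψ : S →* ℂˣ)
    (g : K) (h : S) (w : ℂ) :
    (Submodule.Quotient.mk (MonoidAlgebra.single (g * (h : K)) w) : InducedModule S ψ)
      = Submodule.Quotient.mk (MonoidAlgebra.single g ((ψ h : ℂ) * w)) := by
  rw [Submodule.Quotient.eq]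
  have hmem : (MonoidAlgebra.single (h : K) 1 - MonoidAlgebra.single 1 ((ψ h : ℂ))
      : MonoidAlgebra ℂ K) ∈ inducedRel S ψ := Submodule.subset_span ⟨h, rfl⟩
  have h2 := Submodule.smul_mem (inducedRel S ψ) (MonoidAlgebra.single g w) hmem
  have h3 : (MonoidAlgebra.single g w : MonoidAlgebra ℂ K) •
      (MonoidAlgebra.single (h : K) 1 - MonoidAlgebra.single 1 ((ψ h : ℂ)))
      = MonoidAlgebra.single (g * (h : K)) w - MonoidAlgebra.single g ((ψ h : ℂ) * w) := by
    rw [smul_eq_mul, mul_sub, MonoidAlgebra.single_mul_single, MonoidAlgebra.single_mul_single,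
      mul_one, mul_one, mul_comm w]
  rwa [h3] at h2

lemma aux_vanish {K : Type*} [Group K] (S : Subgroup K) (ψ : S →* ℂˣ)
    {M : Type*} [AddCommGroup M] [Module ℂ M] (f : MonoidAlgebra ℂ K →ₗ[ℂ] M)
    (hf : ∀ (g : K) (h : S) (w : ℂ),
      f (MonoidAlgebra.single (g * (h : K)) w) = f (MonoidAlgebra.single g ((ψ h : ℂ) * w)))
    {x : MonoidAlgebra ℂ K} (hx : x ∈ inducedRel S ψ) : f x = 0 := by
  have key : ∀ (y : MonoidAlgebra ℂ K), y ∈ inducedRel S ψ →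
      ∀ r : MonoidAlgebra ℂ K, f (r * y) = 0 := by
    intro y hy
    refine Submodule.span_induction ?_ ?_ ?_ ?_ hy
    · rintro a ⟨h, rfl⟩ r
      set s : MonoidAlgebra ℂ K :=
        MonoidAlgebra.single (h : K) 1 - MonoidAlgebra.single 1 ((ψ h : ℂ)) with hs
      have hext : f.comp (LinearMap.mulRight ℂ s) = 0 := by
        refine MonoidAlgebra.lhom_ext' fun g => LinearMap.ext fun c => ?_
        show f (MonoidAlgebra.single g c * s) = 0
        rw [hs, mul_sub, MonoidAlgebra.single_mul_single, MonoidAlgebra.single_mul_single,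
          mul_one, mul_one, map_sub, hf g h c, mul_comm]
        exact sub_self _
      simpa using LinearMap.congr_fun hext r
    · intro r; simp
    · intro a b _ _ ha hb r
      rw [mul_add, map_add, ha, hb, add_zero]
    · intro a b _ hb r
      rw [smul_eq_mul, ← mul_assoc]
      exact hb _
  simpa using key x hx 1

/-- Lift a `ℂ`-linear map killing the relations to the quotient. -/
def inducedLift {K : Type*} [Group K] (S : Subgroup K) (ψ : S →* ℂˣ)
    {M : Type*} [AddCommGroup M] [Module ℂ M] (f : MonoidAlgebra ℂ K →ₗ[ℂ] M)
    (hf : ∀ (g : K) (h : S) (w : ℂ),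
      f (MonoidAlgebra.single (g * (h : K)) w) = f (MonoidAlgebra.single g ((ψ h : ℂ) * w))) :
    InducedModule S ψ →ₗ[ℂ] M :=
  (Submodule.liftQ ((inducedRel S ψ).restrictScalars ℂ) f
      (fun x hx => aux_vanish S ψ f hf hx)) ∘ₗ
    ((Submodule.Quotient.restrictScalarsEquiv ℂ (inducedRel S ψ)).symm :
      InducedModule S ψ →ₗ[ℂ] _)

@[simp] lemma inducedLift_mk {K : Type*} [Group K] (S : Subgroup K) (ψ : S →* ℂˣ)
    {M : Type*} [AddCommGroup M] [Module ℂ M] (f : MonoidAlgebra ℂ K →ₗ[ℂ] M)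
    (hf : ∀ (g : K) (h : S) (w : ℂ),
      f (MonoidAlgebra.single (g * (h : K)) w) = f (MonoidAlgebra.single g ((ψ h : ℂ) * w)))
    (x : MonoidAlgebra ℂ K) :
    inducedLift S ψ f hf (Submodule.Quotient.mk x) = f x := by
  simp [inducedLift, Submodule.Quotient.restrictScalarsEquiv_symm_mk]
  exact Submodule.liftQ_apply _ _ _

lemma ms {K : Type*} [Group K] (a : K) (b : ℂ) :
    (MonoidAlgebra.single a b).coeff = Finsupp.single a b := rfl

/-- The subgroup `J ∩ z H z⁻¹` regarded as a subgroup of `J`; its elements are the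
`x ∈ J` with `z⁻¹ x z ∈ H`. -/
def interConj {G : Type*} [Group G] (J H : Subgroup G) (z : G) : Subgroup J :=
  (H.comap (MulAut.conj z⁻¹).toMonoidHom).subgroupOf J

lemma mem_interConj_iff {G : Type*} [Group G] (J H : Subgroup G) (z : G) (u : J) :
    u ∈ interConj J H z ↔ z⁻¹ * (u : G) * z ∈ H := by
  simp [interConj, Subgroup.mem_subgroupOf, Subgroup.mem_comap, mul_assoc]

set_option maxHeartbeats 2000000 in
/-- double coset formula / Mackey decomposition.  Let `G` be a finite
group, `J, H ≤ G`, `φ : H → ℂˣ` a character, `Z` a complete set of representatives of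
`J\G/H`, and for `z ∈ Z` let `φ_z` be the character of `J ∩ zHz⁻¹` with
`φ_z(x) = φ(z⁻¹ x z)`.  Then the map `α` sending `g ⊗ w = (jzh) ⊗ w` to `j ⊗ φ(h)w` in
the `z`-summand is a well-defined `J`-equivariant `ℂ`-linear isomorphism
`Res_J (ℂ[G] ⊗_{ℂ[H]} ℂ_φ) ≅ ⊕_{z ∈ Z} ℂ[J] ⊗_{ℂ[J ∩ zHz⁻¹]} ℂ_{φ_z}`,
with inverse `j ⊗ w ↦ (jz) ⊗ w` on the `z`-summand. -/
theorem statement10 {G : Type*} [Group G] [Fintype G] [DecidableEq G]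
    (J H : Subgroup G) (φ : H →* ℂˣ) (Z : Finset G)
    (hZ : ∀ g : G, ∃! z : G, z ∈ Z ∧ ∃ j ∈ J, ∃ h ∈ H, g = j * z * h)
    (φz : ∀ z : G, ↥(interConj J H z) →* ℂˣ)
    (hφz : ∀ (z x : G) (hxJ : x ∈ J) (hx : (⟨x, hxJ⟩ : J) ∈ interConj J H z)
      (hxH : z⁻¹ * x * z ∈ H),
      φz z ⟨⟨x, hxJ⟩, hx⟩ = φ ⟨z⁻¹ * x * z, hxH⟩) :
    ∃ e : InducedModule H φ ≃ₗ[ℂ]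
        DirectSum {z : G // z ∈ Z} (fun z => InducedModule (interConj J H z.1) (φz z.1)),
      -- `e` is `J`-equivariant, i.e. an isomorphism of `ℂ[J]`-modules
      (∀ (j' : J) (m : InducedModule H φ) (z : {z : G // z ∈ Z}),
        e ((MonoidAlgebra.single (j' : G) (1:ℂ)) • m) z
          = (MonoidAlgebra.single j' (1:ℂ) : MonoidAlgebra ℂ J) • (e m z)) ∧
      -- the formula for `α`: for `g = j z h`, `g ⊗ w ↦ j ⊗ φ(h) w` in the `z`-summand
      (∀ (z : {z : G // z ∈ Z}) (j : J) (h : H) (w : ℂ),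
        e (Submodule.Quotient.mk (MonoidAlgebra.single ((j : G) * z.1 * (h : G)) w))
          = DirectSum.of
              (fun z : {z : G // z ∈ Z} => InducedModule (interConj J H z.1) (φz z.1)) z
              (Submodule.Quotient.mk (MonoidAlgebra.single j ((φ h : ℂ) * w)))) ∧
      -- the formula for the inverse: `j ⊗ w` in the `z`-summand maps to `(jz) ⊗ w`
      (∀ (z : {z : G // z ∈ Z}) (j : J) (w : ℂ),
        e.symm (DirectSum.of
            (fun z : {z : G // z ∈ Z} => InducedModule (interConj J H z.1) (φz z.1)) z
            (Submodule.Quotient.mk (MonoidAlgebra.single j w)))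
          = Submodule.Quotient.mk (MonoidAlgebra.single ((j : G) * z.1) w)) := by
  classical
  choose zf hzZ jf hjJ hh hhH hdec using fun g => (hZ g).exists
  -- the well-definedness lemma
  have wd : ∀ (z : G) (j j' : J) (h h' : H) (w : ℂ),
      (j : G) * z * h = (j' : G) * z * h' →
      (Submodule.Quotient.mk (MonoidAlgebra.single j ((φ h : ℂ) * w))
        : InducedModule (interConj J H z) (φz z))
      = Submodule.Quotient.mk (MonoidAlgebra.single j' ((φ h' : ℂ) * w)) := by
    intro z j j' h h' w heq
    set u : J := j⁻¹ * j' with hu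
    have hcoe : (u : G) = (j : G)⁻¹ * (j' : G) := rfl
    have hval : z⁻¹ * (u : G) * z = (h : G) * (h' : G)⁻¹ := by
      have h1 : (j' : G) = (j : G) * z * (h : G) * ((h' : G))⁻¹ * z⁻¹ := by
        rw [heq]; group
      rw [hcoe, h1]; group
    have hmemH : z⁻¹ * (u : G) * z ∈ H := by
      rw [hval]; exact mul_mem h.2 (inv_mem h'.2)
    have hmem : u ∈ interConj J H z := (mem_interConj_iff J H z u).2 hmemH
    have hφu : (φz z ⟨u, hmem⟩ : ℂ) = (φ h : ℂ) * ((φ h' : ℂ))⁻¹ := by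
      have := hφz z (u : G) u.2 hmem hmemH
      have h2 : (⟨z⁻¹ * (u : G) * z, hmemH⟩ : H) = h * h'⁻¹ := Subtype.ext (by
        push_cast; exact hval)
      rw [h2] at this
      rw [this]
      simp [Units.val_mul, Units.val_inv_eq_inv_val]
    have hj' : j' = j * u := by rw [hu]; group
    rw [hj', aux_mk_single_mul (interConj J H z) (φz z) j ⟨u, hmem⟩ ((φ h' : ℂ) * w), hφu]
    congr 1
    congr 1
    have hne : (φ h' : ℂ) ≠ 0 := Units.ne_zero _
    field_simp
  have huniq : ∀ (g z' : G), z' ∈ Z → (∃ j ∈ J, ∃ h ∈ H, g = j * z' * h) → z' = zf g :=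
    fun g z' hz' hex =>
      (hZ g).unique ⟨hz', hex⟩ ⟨hzZ g, jf g, hjJ g, hh g, hhH g, hdec g⟩
  set Mz : {z : G // z ∈ Z} → Type _ :=
    (fun z => InducedModule (interConj J H z.1) (φz z.1)) with hMz
  let v : G → DirectSum {z : G // z ∈ Z} Mz := fun g =>
    DirectSum.lof ℂ {z : G // z ∈ Z} Mz ⟨zf g, hzZ g⟩
      (Submodule.Quotient.mk
        (MonoidAlgebra.single (⟨jf g, hjJ g⟩ : J) ((φ (⟨hh g, hhH g⟩ : H) : ℂ))))
  let F : MonoidAlgebra ℂ G →ₗ[ℂ] DirectSum {z : G // z ∈ Z} Mz :=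
    Finsupp.linearCombination ℂ v ∘ₗ (MonoidAlgebra.coeffLinearEquiv ℂ).toLinearMap
  have hFs : ∀ (g : G) (w : ℂ), F (MonoidAlgebra.single g w) = w • v g := by
    intro g w
    show Finsupp.linearCombination ℂ v (MonoidAlgebra.single g w).coeff = _
    rw [ms]
    exact Finsupp.linearCombination_single ..
  have Fsingle : ∀ (g : G) (w : ℂ) (z' : G) (hz' : z' ∈ Z) (j : J) (h : H),
      g = (j : G) * z' * (h : G) →
      F (MonoidAlgebra.single g w)
        = DirectSum.lof ℂ {z : G // z ∈ Z} Mz ⟨z', hz'⟩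
            (Submodule.Quotient.mk (MonoidAlgebra.single j ((φ h : ℂ) * w))) := by
    intro g w z' hz' j h hg
    have hzz : z' = zf g := huniq g z' hz' ⟨j, j.2, h, h.2, hg⟩
    subst hzz
    have hdecomp : ((⟨jf g, hjJ g⟩ : J) : G) * zf g * ((⟨hh g, hhH g⟩ : H) : G)
        = (j : G) * zf g * (h : G) := (hdec g).symm.trans hg
    rw [hFs g w]
    show w • DirectSum.lof ℂ {z : G // z ∈ Z} Mz ⟨zf g, hzZ g⟩
        (Submodule.Quotient.mk
          (MonoidAlgebra.single (⟨jf g, hjJ g⟩ : J) ((φ (⟨hh g, hhH g⟩ : H) : ℂ)))) = _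
    rw [← map_smul, ← Submodule.Quotient.mk_smul, MonoidAlgebra.smul_single, smul_eq_mul]
    have := wd (zf g) ⟨jf g, hjJ g⟩ j ⟨hh g, hhH g⟩ h w hdecomp
    rw [mul_comm w]
    exact congrArg _ this
  have hFcond : ∀ (g : G) (h : H) (w : ℂ),
      F (MonoidAlgebra.single (g * (h : G)) w) = F (MonoidAlgebra.single g ((φ h : ℂ) * w)) := by
    intro g h w
    rw [Fsingle (g * (h : G)) w (zf g) (hzZ g) ⟨jf g, hjJ g⟩ ((⟨hh g, hhH g⟩ : H) * h)
        (by push_cast; rw [← mul_assoc, ← hdec g]),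
      Fsingle g ((φ h : ℂ) * w) (zf g) (hzZ g) ⟨jf g, hjJ g⟩ ⟨hh g, hhH g⟩ (hdec g)]
    refine congrArg _ (congrArg _ (congrArg _ ?_))
    rw [map_mul, Units.val_mul]
    ring
  let Fbar : InducedModule H φ →ₗ[ℂ] DirectSum {z : G // z ∈ Z} Mz :=
    @inducedLift G _ H φ (DirectSum {z : G // z ∈ Z} Mz) _ _ F hFcond
  have hFbar : ∀ x, Fbar (Submodule.Quotient.mk x) = F x :=
    fun x => @inducedLift_mk G _ H φ (DirectSum {z : G // z ∈ Z} Mz) _ _ F hFcond x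
  -- the backward maps
  let bz : ∀ _z : {z : G // z ∈ Z}, MonoidAlgebra ℂ J →ₗ[ℂ] InducedModule H φ := fun z =>
    Finsupp.linearCombination ℂ (fun j : J =>
      (Submodule.Quotient.mk (MonoidAlgebra.single ((j : G) * z.1) 1) : InducedModule H φ)) ∘ₗ
      (MonoidAlgebra.coeffLinearEquiv ℂ).toLinearMap
  have hbz : ∀ (z : {z : G // z ∈ Z}) (j : J) (w : ℂ),
      bz z (MonoidAlgebra.single j w)
        = Submodule.Quotient.mk (MonoidAlgebra.single ((j : G) * z.1) w) := by
    intro z j w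
    show (Finsupp.linearCombination ℂ _) (MonoidAlgebra.single j w).coeff = _
    rw [ms, Finsupp.linearCombination_single, ← Submodule.Quotient.mk_smul,
      MonoidAlgebra.smul_single, smul_eq_mul, mul_one]
  have hbzcond : ∀ (z : {z : G // z ∈ Z}) (j : J) (u : interConj J H z.1) (w : ℂ),
      bz z (MonoidAlgebra.single ((j * (u : J) : J)) w)
        = bz z (MonoidAlgebra.single j ((φz z.1 u : ℂ) * w)) := by
    intro z j u w
    rw [hbz, hbz]
    have hmemH : z.1⁻¹ * ((u : J) : G) * z.1 ∈ H :=
      (mem_interConj_iff J H z.1 (u : J)).1 u.2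
    have hg : ((j * (u : J) : J) : G) * z.1
        = ((j : G) * z.1) * (z.1⁻¹ * ((u : J) : G) * z.1) := by
      push_cast; group
    rw [hg]
    have := aux_mk_single_mul H φ ((j : G) * z.1) ⟨z.1⁻¹ * ((u : J) : G) * z.1, hmemH⟩ w
    rw [this]
    have hval : (φ ⟨z.1⁻¹ * ((u : J) : G) * z.1, hmemH⟩ : ℂˣ) = φz z.1 u :=
      (hφz z.1 ((u : J) : G) (u : J).2 u.2 hmemH).symm
    rw [hval]
  let Bz : ∀ z : {z : G // z ∈ Z}, Mz z →ₗ[ℂ] InducedModule H φ := fun z =>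
    inducedLift (interConj J H z.1) (φz z.1) (bz z) (hbzcond z)
  let B : DirectSum {z : G // z ∈ Z} Mz →ₗ[ℂ] InducedModule H φ :=
    DirectSum.toModule ℂ _ _ Bz
  have hB : ∀ (z : {z : G // z ∈ Z}) (j : J) (w : ℂ),
      B (DirectSum.of Mz z (Submodule.Quotient.mk (MonoidAlgebra.single j w)))
        = Submodule.Quotient.mk (MonoidAlgebra.single ((j : G) * z.1) w) := by
    intro z j w
    rw [← DirectSum.lof_eq_of ℂ, DirectSum.toModule_lof]
    show inducedLift _ _ (bz z) (hbzcond z) (Submodule.Quotient.mk _) = _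
    rw [inducedLift_mk, hbz]
  -- mutual inverses
  have hBF : ∀ m : InducedModule H φ, B (Fbar m) = m := by
    intro m
    obtain ⟨x, rfl⟩ := Submodule.Quotient.mk_surjective _ m
    rw [hFbar]
    induction x using MonoidAlgebra.induction_linear with
    | zero => rw [map_zero, map_zero, Submodule.Quotient.mk_zero]
    | add p q hp hq => rw [map_add, map_add, hp, hq, Submodule.Quotient.mk_add]
    | single g w =>
      rw [Fsingle g w (zf g) (hzZ g) ⟨jf g, hjJ g⟩ ⟨hh g, hhH g⟩ (hdec g),
        DirectSum.lof_eq_of, hB]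
      have := aux_mk_single_mul H φ (jf g * zf g) (⟨hh g, hhH g⟩ : H) w
      rw [← this]
      have : jf g * zf g * ((⟨hh g, hhH g⟩ : H) : G) = g := (hdec g).symm
      rw [this]
  have hFB : ∀ y : DirectSum {z : G // z ∈ Z} Mz, Fbar (B y) = y := by
    intro y
    induction y using DirectSum.induction_on with
    | zero => rw [map_zero, map_zero]
    | add a b ha hb => rw [map_add, map_add, ha, hb]
    | of z m =>
      obtain ⟨x, rfl⟩ := Submodule.Quotient.mk_surjective _ m
      induction x using MonoidAlgebra.induction_linear with
      | zero =>
        rw [Submodule.Quotient.mk_zero, map_zero, map_zero, map_zero]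
      | add p q hp hq =>
        rw [Submodule.Quotient.mk_add, map_add, map_add, map_add, hp, hq]
      | single j w =>
        rw [hB z j w, hFbar,
          Fsingle ((j : G) * z.1) w z.1 z.2 j (1 : H) (by push_cast; group),
          DirectSum.lof_eq_of]
        congr 1
        rw [map_one, Units.val_one, one_mul]
  refine ⟨LinearEquiv.ofLinear Fbar B (LinearMap.ext hFB) (LinearMap.ext hBF), ?_, ?_, ?_⟩
  · -- equivariance
    intro j' m z'
    simp only [LinearEquiv.ofLinear_apply]
    obtain ⟨x, rfl⟩ := Submodule.Quotient.mk_surjective _ m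
    have hsm : (MonoidAlgebra.single ((j' : G)) (1:ℂ))
          • (Submodule.Quotient.mk x : InducedModule H φ)
        = Submodule.Quotient.mk (MonoidAlgebra.single ((j' : G)) (1:ℂ) * x) := by
      rw [← Submodule.Quotient.mk_smul, smul_eq_mul]
    rw [hsm]
    clear hsm
    induction x using MonoidAlgebra.induction_linear with
    | zero => simp
    | add p q hp hq =>
      rw [mul_add, Submodule.Quotient.mk_add, Submodule.Quotient.mk_add, map_add, map_add,
        DirectSum.add_apply, DirectSum.add_apply, hp, hq, smul_add]
    | single g w =>
      rw [MonoidAlgebra.single_mul_single, one_mul, hFbar, hFbar,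
        Fsingle ((j' : G) * g) w (zf g) (hzZ g) (j' * ⟨jf g, hjJ g⟩) ⟨hh g, hhH g⟩
          (by
            push_cast
            conv_lhs => rw [hdec g]
            group),
        Fsingle g w (zf g) (hzZ g) ⟨jf g, hjJ g⟩ ⟨hh g, hhH g⟩ (hdec g),
        DirectSum.lof_eq_of, DirectSum.lof_eq_of]
      by_cases hz' : z' = ⟨zf g, hzZ g⟩
      · subst hz'
        rw [DirectSum.of_eq_same, DirectSum.of_eq_same, ← Submodule.Quotient.mk_smul,
          smul_eq_mul, MonoidAlgebra.single_mul_single, one_mul]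
      · rw [DirectSum.of_eq_of_ne _ _ _ hz', DirectSum.of_eq_of_ne _ _ _ hz',
          smul_zero]
  · -- the forward formula
    intro z j h w
    simp only [LinearEquiv.ofLinear_apply]
    rw [hFbar, Fsingle ((j : G) * z.1 * (h : G)) w z.1 z.2 j h rfl, DirectSum.lof_eq_of]
  · -- the inverse formula
    intro z j w
    simp only [LinearEquiv.ofLinear_symm_apply]
    exact hB z j w
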